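/- Let G be a group, G' ≤ G a finite index subgroup, and g ∈ G a central element with g ∈ G'. If the class of g in H_1(G;Q) = G^{ab} ⊗ Q is zero, then the class of g in H_1(G';Q) = (G')^{ab} ⊗ Q is zero. -/

import Mathlib

open scoped TensorProduct

instance : Module.Flat ℤ ℚ := IsLocalization.flat ℚ (nonZeroDivisors ℤ)

lemma torsion_of_tensor_zero {M : Type} [AddCommGroup M] (x : M)
    (h : ((1:ℚ) ⊗ₜ[ℤ] x : ℚ ⊗[ℤ] M) = 0) : ∃ n : ℤ, n ≠ 0 ∧ n • x = 0 := by
  by_contra hc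
  push_neg at hc
  set f : ℤ →ₗ[ℤ] M := LinearMap.toSpanSingleton ℤ M x
  have hinj : Function.Injective f := by
    rw [injective_iff_map_eq_zero]
    intro a ha
    by_contra ha0
    exact hc a ha0 ha
  have h2 := Module.Flat.lTensor_preserves_injective_linearMap (M := ℚ) f hinj
  have heq : (LinearMap.lTensor ℚ f) ((1:ℚ) ⊗ₜ[ℤ] (1:ℤ)) = (1:ℚ) ⊗ₜ[ℤ] x := by
    simp [f, LinearMap.toSpanSingleton]
  have h3 : ((1:ℚ) ⊗ₜ[ℤ] (1:ℤ) : ℚ ⊗[ℤ] ℤ) = 0 := by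
    apply h2
    rw [heq, h, map_zero]
  have h4 := congrArg (TensorProduct.rid ℤ ℚ) h3
  simp at h4

lemma tensor_zero_of_torsion {M : Type} [AddCommGroup M] (x : M) (k : ℤ)
    (hk : k ≠ 0) (h : k • x = 0) : ((1:ℚ) ⊗ₜ[ℤ] x : ℚ ⊗[ℤ] M) = 0 := by
  have h1 : (k : ℚ) • ((1:ℚ) ⊗ₜ[ℤ] x : ℚ ⊗[ℤ] M) = 0 := by
    rw [Int.cast_smul_eq_zsmul, ← TensorProduct.tmul_smul, h, TensorProduct.tmul_zero]
  have hk' : (k : ℚ) ≠ 0 := Int.cast_ne_zero.mpr hk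
  calc ((1:ℚ) ⊗ₜ[ℤ] x : ℚ ⊗[ℤ] M) = (k:ℚ)⁻¹ • ((k:ℚ) • ((1:ℚ) ⊗ₜ[ℤ] x)) := by
        rw [smul_smul, inv_mul_cancel₀ hk', one_smul]
    _ = 0 := by rw [h1, smul_zero]

/-- If `G' ≤ G` has finite index, `g ∈ G'` is central in `G`, and the
class of `g` in `H₁(G;ℚ) = G^{ab} ⊗ ℚ` vanishes, then the class of `g` in
`H₁(G';ℚ) = (G')^{ab} ⊗ ℚ` vanishes. -/
theorem central_element_vanishes_in_finite_index {G : Type} [Group G]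
    (G' : Subgroup G) [G'.FiniteIndex]
    (g : G) (hcent : g ∈ Subgroup.center G) (hg' : g ∈ G')
    (hvanish : ((1 : ℚ) ⊗ₜ[ℤ] Additive.ofMul (Abelianization.of g)
        : ℚ ⊗[ℤ] Additive (Abelianization G)) = 0) :
    ((1 : ℚ) ⊗ₜ[ℤ] Additive.ofMul (Abelianization.of (⟨g, hg'⟩ : G'))
        : ℚ ⊗[ℤ] Additive (Abelianization G')) = 0 := by
  obtain ⟨n, hn, hnx⟩ := torsion_of_tensor_zero _ hvanish
  -- hnx : n • ofMul (of g) = 0, i.e. (of g)^n = 1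
  have hgn : Abelianization.of (g ^ n) = 1 := by
    rw [map_zpow]
    have : Additive.ofMul ((Abelianization.of g) ^ n) = 0 := by
      rw [ofMul_zpow, hnx]
    exact Additive.ofMul.injective (by simpa using this)
  -- transfer
  set ϕ : G' →* Abelianization G' := Abelianization.of
  have key : ∀ (k : ℕ) (g₀ : G), g₀⁻¹ * g ^ k * g₀ ∈ G' → g₀⁻¹ * g ^ k * g₀ = g ^ k := by
    intro k g₀ _
    have : g ^ k ∈ Subgroup.center G := Subgroup.pow_mem _ hcent k
    rw [Subgroup.mem_center_iff] at this
    rw [this g₀⁻¹, mul_assoc, inv_mul_cancel, mul_one]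
  have htrans := MonoidHom.transfer_eq_pow ϕ g key
  set V : G →* Abelianization G' := MonoidHom.transfer ϕ
  -- V kills [G,G]: factor through Abelianization G
  have hV : V (g ^ n) = 1 := by
    have : V (g ^ n) = Abelianization.lift V (Abelianization.of (g ^ n)) := by
      rw [Abelianization.lift_apply_of]
    rw [this, hgn, map_one]
  have hVg : V g = ϕ ⟨g, hg'⟩ ^ G'.index := by
    rw [htrans, ← map_pow]
    congr 1
  have hfin : (V g) ^ n = 1 := by rw [← map_zpow, hV]
  rw [hVg, ← zpow_natCast, ← zpow_mul] at hfin
  -- so (G'.index * n) • ofMul (of ⟨g,hg'⟩) = 0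
  have hk : ((G'.index : ℤ) * n) ≠ 0 :=
    mul_ne_zero (Int.natCast_ne_zero.mpr Subgroup.FiniteIndex.index_ne_zero) hn
  apply tensor_zero_of_torsion _ ((G'.index : ℤ) * n) hk
  have : Additive.ofMul ((ϕ ⟨g, hg'⟩) ^ ((G'.index : ℤ) * n)) = 0 := by
    rw [hfin]; rfl
  rw [ofMul_zpow] at this
  exact this
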